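/- Let G be a group and let B, C be arbitrary elements of G. Define F_2(B,C) = [B,C] and, recursively, F_{i+1}(B,C) = F_i(B,C)·[C^{i-1}, B^i]·[B^i, C^i] for i ≥ 2. Then for every integer i ≥ 2, one has (BC)^i = F_i(B,C) · C^{i-1} · B^i · C. -/

import Mathlib

open scoped commutatorElement

/-- If `F : ℕ → G` satisfies `F 2 = ⁅B,C⁆` and the recurrence
`F (i+1) = F i * ⁅C^(i-1), B^i⁆ * ⁅B^i, C^i⁆` for `i ≥ 2`, then
`(B*C)^i = F i * C^(i-1) * B^i * C` for all `i ≥ 2`. -/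
theorem stmt0 {G : Type*} [Group G] (B C : G) (F : ℕ → G)
    (hF2 : F 2 = ⁅B, C⁆)
    (hFrec : ∀ i : ℕ, 2 ≤ i → F (i + 1) = F i * ⁅C ^ (i - 1), B ^ i⁆ * ⁅B ^ i, C ^ i⁆) :
    ∀ i : ℕ, 2 ≤ i → (B * C) ^ i = F i * C ^ (i - 1) * B ^ i * C := by
  intro i hi
  induction i, hi using Nat.le_induction with
  | base =>
    rw [hF2]
    simp only [commutatorElement_def]
    simp [pow_two, mul_assoc]
  | succ n hn ih =>
    rw [hFrec n hn, pow_succ (B*C), ih]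
    have h1 : n + 1 - 1 = n := by omega
    obtain ⟨m, rfl⟩ := Nat.exists_eq_add_of_le hn
    have h2 : 2 + m - 1 = m + 1 := by omega
    simp only [h1, h2, commutatorElement_def]
    group
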